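/- In simply-laced type with ϖ_k minuscule, J = I \ {k}, and y ∈ W^J, γ ∈ Δ⁺ \ Δ⁺_J: there is a quantum edge y → ys_γ in the quantum Bruhat graph (i.e. ℓ(ys_γ) = ℓ(y) + 1 - 2⟨ρ, γ∨⟩) if and only if y ≠ e and γ = α_k. -/

import Mathlib

/-- An axiomatized finite crystallographic root system datum, with weight/root
space `V` over `ℚ`, simple roots `α i`, an invariant inner product `B`,
Weyl group `W` acting faithfully on `V`, and the set of roots `isRoot`. -/
structure RootSystemData (I : Type) [Fintype I] [DecidableEq I] where
  V : Type
  [instAddCommGroup : AddCommGroup V]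
  [instModule : Module ℚ V]
  W : Type
  [instGroup : Group W]
  α : I → V
  B : V →ₗ[ℚ] V →ₗ[ℚ] ℚ
  toLin : W →* Module.End ℚ V
  s : I → W
  isRoot : V → Prop
  B_symm : ∀ x y, B x y = B y x
  B_pos : ∀ β, isRoot β → 0 < B β β
  B_inv : ∀ (w : W) (x y : V), B (toLin w x) (toLin w y) = B x y
  root_simple : ∀ i, isRoot (α i)
  root_inv : ∀ (w : W) (β : V), isRoot β → isRoot (toLin w β)
  root_gen : ∀ β, isRoot β → ∃ (w : W) (i : I), β = toLin w (α i)
  root_finite : (setOf isRoot).Finite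
  indep : LinearIndependent ℚ α
  s_act : ∀ i x, toLin (s i) x = x - (2 * B (α i) x / B (α i) (α i)) • α i
  gen : Subgroup.closure (Set.range s) = ⊤
  faithful : Function.Injective toLin
  root_int : ∀ β, isRoot β → ∃ c : I → ℤ, β = ∑ i, (c i : ℚ) • α i
  pos_or_neg : ∀ β, isRoot β →
    (∃ c : I → ℕ, β = ∑ i, (c i : ℚ) • α i) ∨ (∃ c : I → ℕ, -β = ∑ i, (c i : ℚ) • α i)

attribute [instance] RootSystemData.instAddCommGroup RootSystemData.instModule
  RootSystemData.instGroup

namespace RootSystemData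

variable {I : Type} [Fintype I] [DecidableEq I] (R : RootSystemData I)

/-- `β` is a positive root. -/
def IsPos (β : R.V) : Prop :=
  R.isRoot β ∧ ∃ c : I → ℕ, β = ∑ i, (c i : ℚ) • R.α i

/-- The finite set of positive roots. -/
noncomputable def posFinset : Finset R.V :=
  (Set.Finite.subset R.root_finite (fun _ hb => hb.1) : (setOf R.IsPos).Finite).toFinset

/-- Half the sum of the positive roots. -/
noncomputable def ρ : R.V := (2 : ℚ)⁻¹ • ∑ β ∈ R.posFinset, β

/-- The pairing `⟨x, β∨⟩` of `x` with the coroot of `β`. -/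
noncomputable def coroot (β x : R.V) : ℚ := 2 * R.B β x / R.B β β

open Classical in
/-- The reflection `s_β ∈ W` in a root `β`. -/
noncomputable def refl (β : R.V) : R.W :=
  if h : R.isRoot β then
    (R.root_gen β h).choose * R.s (R.root_gen β h).choose_spec.choose *
      (R.root_gen β h).choose⁻¹
  else 1

/-- The length function on the Weyl group. -/
noncomputable def len (w : R.W) : ℕ :=
  sInf {n | ∃ l : List I, l.length = n ∧ (l.map R.s).prod = w}

/-- Bruhat order: generated by multiplication by reflections which increases length. -/
def bruhatLE : R.W → R.W → Prop :=
  Relation.ReflTransGen (fun u v => (∃ β, R.IsPos β ∧ v = R.refl β * u) ∧ R.len u < R.len v)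

def bruhatLT (u v : R.W) : Prop := R.bruhatLE u v ∧ u ≠ v

/-- The parabolic subgroup `W_J`. -/
def WJ (J : Set I) : Subgroup R.W := Subgroup.closure (R.s '' J)

/-- `w` is a minimal-length representative of its coset `w W_J`. -/
def IsMinRep (J : Set I) (w : R.W) : Prop :=
  ∀ z ∈ R.WJ J, R.len w ≤ R.len (w * z)

/-- `β ∈ Δ⁺_J`: positive roots in the span of the simple roots indexed by `J`. -/
def posJ (J : Set I) (β : R.V) : Prop :=
  R.IsPos β ∧ β ∈ Submodule.span ℚ (R.α '' J)

/-- A Bruhat edge `x → x s_β` in the quantum Bruhat graph. -/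
def BruhatEdge (x : R.W) (β : R.V) : Prop :=
  R.IsPos β ∧ R.len (x * R.refl β) = R.len x + 1

/-- A quantum edge `x → x s_β` in the quantum Bruhat graph. -/
def QuantumEdge (x : R.W) (β : R.V) : Prop :=
  R.IsPos β ∧ (R.len (x * R.refl β) : ℚ) = R.len x + 1 - 2 * R.coroot β R.ρ

/-- An edge of the quantum Bruhat graph. -/
def QBGEdge (x : R.W) (β : R.V) : Prop := R.BruhatEdge x β ∨ R.QuantumEdge x β

/-- A quantum root: `ℓ(s_β) = 2⟨ρ, β∨⟩ - 1`. -/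
def IsQuantumRoot (β : R.V) : Prop :=
  R.IsPos β ∧ (R.len (R.refl β) : ℚ) = 2 * R.coroot β R.ρ - 1

/-- A long root (maximal squared length); in simply-laced type all roots are long. -/
def IsLong (β : R.V) : Prop :=
  R.isRoot β ∧ ∀ γ, R.isRoot γ → R.B γ γ ≤ R.B β β

/-- A short root. -/
def IsShort (β : R.V) : Prop := R.isRoot β ∧ ¬ R.IsLong β

def IsSimplyLaced : Prop :=
  ∀ β γ, R.isRoot β → R.isRoot γ → R.B β β = R.B γ γ

def IsIrreducible : Prop :=
  Nonempty I ∧ ∀ J : Set I,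
    (∀ i ∈ J, ∀ j ∉ J, R.B (R.α i) (R.α j) = 0) → J = ∅ ∨ J = Set.univ

/-- `θ` is the highest root. -/
def IsHighestRoot (θ : R.V) : Prop :=
  R.IsPos θ ∧ ∀ β, R.IsPos β → ∃ c : I → ℕ, θ - β = ∑ i, (c i : ℚ) • R.α i

/-- `ϖ` is the fundamental weight associated to `k`. -/
def IsFundamental (k : I) (ϖ : R.V) : Prop :=
  ∀ i, R.coroot (R.α i) ϖ = if i = k then 1 else 0

/-- `ϖ` is minuscule. -/
def IsMinuscule (ϖ : R.V) : Prop :=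
  ∀ β, R.isRoot β → R.coroot β ϖ ∈ ({-1, 0, 1} : Set ℚ)

/-- A strict total order on `Δ⁺` which is a reflection (convex) order. -/
def IsReflectionOrder (lt : R.V → R.V → Prop) : Prop :=
  (∀ β, ¬ lt β β) ∧ (∀ a b c, lt a b → lt b c → lt a c) ∧
  (∀ β γ, R.IsPos β → R.IsPos γ → β ≠ γ → lt β γ ∨ lt γ β) ∧
  (∀ β γ, R.IsPos β → R.IsPos γ → R.IsPos (β + γ) →
    (lt β (β + γ) ∧ lt (β + γ) γ) ∨ (lt γ (β + γ) ∧ lt (β + γ) β))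

end RootSystemData

open RootSystemData in
/-- A directed path in the quantum Bruhat graph with the given list of labels. -/
def QBGPath {I : Type} [Fintype I] [DecidableEq I] (R : RootSystemData I) :
    R.W → List R.V → R.W → Prop
  | x, [], y => x = y
  | x, β :: l, y => R.QBGEdge x β ∧ QBGPath R (x * R.refl β) l y

open RootSystemData in
/-- A directed path in the Bruhat graph (Bruhat edges only). -/
def BGPath {I : Type} [Fintype I] [DecidableEq I] (R : RootSystemData I) :
    R.W → List R.V → R.W → Prop
  | x, [], y => x = y
  | x, β :: l, y => R.BruhatEdge x β ∧ BGPath R (x * R.refl β) l y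

/-- The Cartan pairing `⟨α_j, α_i∨⟩` of type `B_n` (Bourbaki labelling, shifted
to be 0-based: the short simple root is the last one, index `n-1`). -/
def BCartan (n : ℕ) (i j : Fin n) : ℚ :=
  if i = j then 2
  else if (i : ℕ) = n - 1 ∧ (j : ℕ) + 1 = n - 1 then -2
  else if ((i : ℕ) + 1 = j ∨ (j : ℕ) + 1 = i) then -1
  else 0

/-- `R` is of type `B_n` (via the identification `e` of its index set with `Fin n`). -/
def IsTypeB {I : Type} [Fintype I] [DecidableEq I] (R : RootSystemData I)
    (n : ℕ) (e : I ≃ Fin n) : Prop :=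
  2 ≤ n ∧ ∀ i j, R.coroot (R.α i) (R.α j) = BCartan n (e i) (e j)

/-- The product `s_{a+1} s_{a+2} ⋯ s_{b+1}` (0-based: indices `a, a+1, …, b`). -/
noncomputable def sSeq {n : ℕ} (hn : 0 < n) (R : RootSystemData (Fin n)) (a b : ℕ) : R.W :=
  ((List.range (b + 1 - a)).map (fun t => R.s ⟨(a + t) % n, Nat.mod_lt _ hn⟩)).prod

/-- The sum `α_{a+1} + ⋯ + α_b` of simple roots (0-based half-open interval `[a, b)`). -/
def aSum {n : ℕ} (hn : 0 < n) (R : RootSystemData (Fin n)) (a b : ℕ) : R.V :=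
  ∑ t ∈ Finset.Ico a b, R.α ⟨t % n, Nat.mod_lt _ hn⟩

-- AUXSTART
namespace RootSystemData

attribute [local instance] Classical.propDecidable

variable {I : Type} [Fintype I] [DecidableEq I] (R : RootSystemData I)

/-- Negative root predicate. -/
def IsNeg (x : R.V) : Prop := R.IsPos (-x)

lemma coeff_eq {a b : I → ℚ} (h : ∑ i, a i • R.α i = ∑ i, b i • R.α i) : a = b := by
  have h0 : ∑ i, (a i - b i) • R.α i = 0 := by
    simp only [sub_smul, Finset.sum_sub_distrib, h, sub_self]
  have h1 := Fintype.linearIndependent_iff.mp R.indep (fun i => a i - b i) h0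
  funext i; have : a i - b i = 0 := h1 i; linarith

lemma root_ne_zero {β : R.V} (h : R.isRoot β) : β ≠ 0 := by
  intro h0; have := R.B_pos β h; rw [h0] at this; simp at this

lemma B_simple_ne (i : I) : R.B (R.α i) (R.α i) ≠ 0 :=
  ne_of_gt (R.B_pos _ (R.root_simple i))

lemma s_apply (i : I) (x : R.V) :
    R.toLin (R.s i) x = x - R.coroot (R.α i) x • R.α i := R.s_act i x

lemma s_apply_self (i : I) : R.toLin (R.s i) (R.α i) = -R.α i := by
  rw [R.s_act]
  rw [mul_div_assoc, div_self (R.B_simple_ne i), mul_one, two_smul]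
  abel

lemma isRoot_neg {β : R.V} (h : R.isRoot β) : R.isRoot (-β) := by
  obtain ⟨w, i, hwi⟩ := R.root_gen β h
  have : -β = R.toLin (w * R.s i) (R.α i) := by
    rw [map_mul, Module.End.mul_apply, R.s_apply_self, map_neg, ← hwi]
  rw [this]
  exact R.root_inv _ _ (R.root_simple i)

lemma isPos_or_isNeg {β : R.V} (h : R.isRoot β) : R.IsPos β ∨ R.IsNeg β := by
  rcases R.pos_or_neg β h with h1 | h1
  · exact Or.inl ⟨h, h1⟩
  · exact Or.inr ⟨R.isRoot_neg h, h1⟩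

lemma not_isPos_and_isNeg {β : R.V} (h1 : R.IsPos β) (h2 : R.IsNeg β) : False := by
  obtain ⟨hr, a, ha⟩ := h1
  obtain ⟨_, b, hb⟩ := h2
  have key : (fun i => ((a i : ℚ))) = fun i => -((b i : ℚ)) := by
    apply R.coeff_eq
    rw [← ha]
    have : ∑ i, (-((b i:ℚ))) • R.α i = -∑ i, ((b i:ℚ)) • R.α i := by
      simp [neg_smul, Finset.sum_neg_distrib]
    rw [this, ← hb, neg_neg]
  have hz : ∀ i, a i = 0 := by
    intro i
    have := congrFun key i
    have h1 : (0:ℚ) ≤ (a i : ℚ) := Nat.cast_nonneg _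
    have h2 : (-(b i : ℚ)) ≤ 0 := by simp
    have : (a i : ℚ) = 0 := le_antisymm (this ▸ h2) h1
    exact_mod_cast this
  apply R.root_ne_zero hr
  rw [ha]
  simp [hz]

lemma isPos_of_nonneg_coords {β : R.V} (h : R.isRoot β) (c : I → ℚ)
    (hc : ∀ i, 0 ≤ c i) (hβ : β = ∑ i, c i • R.α i) : R.IsPos β := by
  rcases R.pos_or_neg β h with h1 | h1
  · exact ⟨h, h1⟩
  · exfalso
    obtain ⟨n, hn⟩ := h1
    have key : c = fun i => -((n i : ℚ)) := by
      apply R.coeff_eq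
      rw [← hβ]
      have : ∑ i, (-((n i:ℚ))) • R.α i = -∑ i, ((n i:ℚ)) • R.α i := by
        simp [neg_smul, Finset.sum_neg_distrib]
      rw [this, ← hn, neg_neg]
    have hz : ∀ i, c i = 0 := by
      intro i
      have := congrFun key i
      have h2 : (-(n i : ℚ)) ≤ 0 := by simp
      exact le_antisymm (this ▸ h2) (hc i)
    apply R.root_ne_zero h
    rw [hβ]
    simp [hz]

lemma isPos_simple (i : I) : R.IsPos (R.α i) := by
  refine ⟨R.root_simple i, fun j => if j = i then 1 else 0, ?_⟩
  have : ∀ j, (((if j = i then 1 else 0 : ℕ)):ℚ) • R.α j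
      = if j = i then R.α j else 0 := by
    intro j; split <;> simp
  rw [Finset.sum_congr rfl (fun j _ => this j), Finset.sum_ite_eq' Finset.univ i]
  simp

lemma isNeg_neg_of_isPos {β : R.V} (h : R.IsPos β) : R.IsNeg (-β) := by
  unfold IsNeg; rwa [neg_neg]

lemma mem_posFinset {β : R.V} : β ∈ R.posFinset ↔ R.IsPos β := by
  unfold posFinset
  rw [Set.Finite.mem_toFinset]
  rfl


lemma coroot_apply (β x : R.V) : R.coroot β x = 2 * R.B β x / R.B β β := rfl

lemma coroot_add (β x y : R.V) :
    R.coroot β (x + y) = R.coroot β x + R.coroot β y := by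
  unfold coroot; rw [map_add]; ring

lemma coroot_smul (β : R.V) (c : ℚ) (x : R.V) :
    R.coroot β (c • x) = c * R.coroot β x := by
  unfold coroot; rw [map_smul, smul_eq_mul]; ring

lemma coroot_neg (β x : R.V) : R.coroot β (-x) = - R.coroot β x := by
  unfold coroot; rw [map_neg]; ring

lemma coroot_sub (β x y : R.V) :
    R.coroot β (x - y) = R.coroot β x - R.coroot β y := by
  rw [sub_eq_add_neg, coroot_add, coroot_neg]; ring

lemma coroot_self {β : R.V} (h : R.isRoot β) : R.coroot β β = 2 := by
  unfold coroot
  rw [mul_div_assoc, div_self (ne_of_gt (R.B_pos β h)), mul_one]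

lemma coroot_sum (hsl : R.IsSimplyLaced) {β : R.V} (hβ : R.isRoot β)
    (c : I → ℚ) (hc : β = ∑ i, c i • R.α i) (x : R.V) :
    R.coroot β x = ∑ i, c i * R.coroot (R.α i) x := by
  have hB : R.B β x = ∑ i, c i * R.B (R.α i) x := by
    conv_lhs => rw [hc]
    rw [map_sum, LinearMap.sum_apply]
    exact Finset.sum_congr rfl fun i _ => by rw [map_smul, LinearMap.smul_apply, smul_eq_mul]
  rw [coroot_apply, hB, Finset.mul_sum, Finset.sum_div]
  refine Finset.sum_congr rfl fun i _ => ?_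
  rw [coroot_apply, hsl (R.α i) β (R.root_simple i) hβ]
  ring

lemma sub_smul_simple_coords (c : ℚ) (d : I → ℚ) (i : I) :
    (∑ l, d l • R.α l) - c • R.α i = ∑ l, (d l - if l = i then c else 0) • R.α l := by
  have h1 : ∑ l, (if l = i then c else 0) • R.α l = c • R.α i := by
    simp [ite_smul]
  rw [← h1, ← Finset.sum_sub_distrib]
  simp [sub_smul]

lemma isPos_s_apply (hsl : R.IsSimplyLaced) {i : I} {β : R.V} (hβ : R.IsPos β)
    (hne : β ≠ R.α i) : R.IsPos (R.toLin (R.s i) β) := by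
  obtain ⟨hr, n, hn⟩ := hβ
  have hj : ∃ j, j ≠ i ∧ n j ≠ 0 := by
    by_contra h
    push_neg at h
    have hb : β = ((n i : ℚ)) • R.α i := by
      rw [hn, Finset.sum_eq_single i]
      · intro j _ hji; rw [h j hji]; simp
      · intro hi; exact absurd (Finset.mem_univ i) hi
    have h1 : R.B β β = (n i:ℚ)^2 * R.B (R.α i) (R.α i) := by
      rw [hb]; simp only [map_smul, LinearMap.smul_apply, smul_eq_mul]; ring
    have h2 : R.B β β = R.B (R.α i) (R.α i) := hsl _ _ hr (R.root_simple i)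
    have h3 : ((n i:ℚ))^2 = 1 := by
      have h6 : ((n i:ℚ))^2 * R.B (R.α i) (R.α i) = R.B (R.α i) (R.α i) := by
        rw [← h1, h2]
      exact mul_right_cancel₀ (R.B_simple_ne i) (h6.trans (one_mul _).symm)
    have h4 : n i = 1 := by
      have h5 : n i * n i = 1 := by
        have : ((n i * n i : ℕ) : ℚ) = 1 := by push_cast; nlinarith [h3]
        exact_mod_cast this
      nlinarith [h5]
    exact hne (by rw [hb, h4]; simp)
  obtain ⟨j, hji, hnj⟩ := hj
  set c := R.coroot (R.α i) β with hc
  have hs : R.toLin (R.s i) β = ∑ l, (((n l:ℚ)) - if l = i then c else 0) • R.α l := by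
    rw [R.s_apply, ← hc]
    conv_lhs => rw [hn]
    exact R.sub_smul_simple_coords c _ i
  have hroot := R.root_inv (R.s i) β hr
  rcases R.isPos_or_isNeg hroot with h | h
  · exact h
  · exfalso
    obtain ⟨_, m, hm⟩ := h
    have hs' : R.toLin (R.s i) β = ∑ l, (-((m l:ℚ))) • R.α l := by
      have : -(R.toLin (R.s i) β) = ∑ l, ((m l:ℚ)) • R.α l := hm
      rw [← neg_neg (R.toLin (R.s i) β), this]
      simp [neg_smul, Finset.sum_neg_distrib]
    have key := R.coeff_eq (hs.symm.trans hs')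
    have := congrFun key j
    simp only [if_neg hji, sub_zero] at this
    have h1 : (0:ℚ) < (n j : ℚ) := by exact_mod_cast Nat.pos_of_ne_zero hnj
    rw [this] at h1
    have h2 : (0:ℚ) ≤ (m j : ℚ) := Nat.cast_nonneg _
    linarith

lemma s_invol (i : I) (x : R.V) : R.toLin (R.s i) (R.toLin (R.s i) x) = x := by
  rw [R.s_apply, R.s_apply]
  have h1 : R.coroot (R.α i) (x - R.coroot (R.α i) x • R.α i) = - R.coroot (R.α i) x := by
    rw [coroot_sub, coroot_smul, R.coroot_self (R.root_simple i)]; ring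
  rw [h1, neg_smul]
  abel

lemma s_mul_s (i : I) : R.s i * R.s i = 1 := by
  apply R.faithful
  rw [map_mul, map_one]
  apply LinearMap.ext
  intro x
  rw [Module.End.mul_apply, Module.End.one_apply]
  exact R.s_invol i x

lemma s_apply_possum (hsl : R.IsSimplyLaced) (i : I) :
    R.toLin (R.s i) (∑ β ∈ R.posFinset, β)
      = (∑ β ∈ R.posFinset, β) - R.α i - R.α i := by
  have hmem : R.α i ∈ R.posFinset := R.mem_posFinset.mpr (R.isPos_simple i)
  rw [map_sum]
  rw [← Finset.add_sum_erase _ _ hmem, R.s_apply_self]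
  have herase : ∑ β ∈ R.posFinset.erase (R.α i), R.toLin (R.s i) β
      = ∑ β ∈ R.posFinset.erase (R.α i), β := by
    apply Finset.sum_nbij' (fun β => R.toLin (R.s i) β) (fun β => R.toLin (R.s i) β)
    · intro β hβ
      rw [Finset.mem_erase] at hβ ⊢
      obtain ⟨hβne, hβpos⟩ := hβ
      rw [R.mem_posFinset] at hβpos ⊢
      refine ⟨?_, R.isPos_s_apply hsl hβpos hβne⟩
      intro hcontra
      have : β = R.toLin (R.s i) (R.α i) := by rw [← hcontra, R.s_invol]
      rw [R.s_apply_self] at this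
      exact R.not_isPos_and_isNeg hβpos (by rw [this]; exact R.isNeg_neg_of_isPos (R.isPos_simple i))
    · intro β hβ
      rw [Finset.mem_erase] at hβ ⊢
      obtain ⟨hβne, hβpos⟩ := hβ
      rw [R.mem_posFinset] at hβpos ⊢
      refine ⟨?_, R.isPos_s_apply hsl hβpos hβne⟩
      intro hcontra
      have : β = R.toLin (R.s i) (R.α i) := by rw [← hcontra, R.s_invol]
      rw [R.s_apply_self] at this
      exact R.not_isPos_and_isNeg hβpos (by rw [this]; exact R.isNeg_neg_of_isPos (R.isPos_simple i))
    · intro β _; exact R.s_invol i β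
    · intro β _; exact R.s_invol i β
    · intro β _; rfl
  rw [herase, ← Finset.add_sum_erase _ (fun β => β) hmem]
  abel

lemma coroot_simple_possum (hsl : R.IsSimplyLaced) (i : I) :
    R.coroot (R.α i) (∑ β ∈ R.posFinset, β) = 2 := by
  have h := R.s_apply_possum hsl i
  rw [R.s_apply] at h
  have h3 : R.coroot (R.α i) (∑ β ∈ R.posFinset, β) • R.α i = R.α i + R.α i := by
    have h4 := congrArg (fun z => (∑ β ∈ R.posFinset, β) - z) h
    calc R.coroot (R.α i) (∑ β ∈ R.posFinset, β) • R.α i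
        = (∑ β ∈ R.posFinset, β) - ((∑ β ∈ R.posFinset, β)
            - R.coroot (R.α i) (∑ β ∈ R.posFinset, β) • R.α i) := by abel
      _ = (∑ β ∈ R.posFinset, β) - ((∑ β ∈ R.posFinset, β) - R.α i - R.α i) := h4
      _ = R.α i + R.α i := by abel
  have h5 : (R.coroot (R.α i) (∑ β ∈ R.posFinset, β) - 2) • R.α i = 0 := by
    rw [sub_smul, h3, two_smul]; abel
  rcases smul_eq_zero.mp h5 with h6 | h6
  · linarith [sub_eq_zero.mp h6]
  · exact absurd h6 (R.indep.ne_zero i)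

lemma coroot_simple_rho (hsl : R.IsSimplyLaced) (i : I) :
    R.coroot (R.α i) R.ρ = 1 := by
  unfold ρ
  rw [coroot_smul, R.coroot_simple_possum hsl]
  norm_num

lemma coroot_simple_int (i : I) {δ : R.V} (hδ : R.isRoot δ) :
    ∃ z : ℤ, R.coroot (R.α i) δ = z := by
  obtain ⟨d, hd⟩ := R.root_int δ hδ
  obtain ⟨e, he⟩ := R.root_int _ (R.root_inv (R.s i) δ hδ)
  refine ⟨d i - e i, ?_⟩
  set c := R.coroot (R.α i) δ with hc
  have hs : R.toLin (R.s i) δ = ∑ l, (((d l:ℚ)) - if l = i then c else 0) • R.α l := by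
    rw [R.s_apply, ← hc]
    conv_lhs => rw [hd]
    exact R.sub_smul_simple_coords c _ i
  have key := R.coeff_eq (hs.symm.trans he)
  have h1 := congrFun key i
  simp at h1
  push_cast
  linarith

lemma coroot_int (hsl : R.IsSimplyLaced) {γ δ : R.V} (hγ : R.isRoot γ)
    (hδ : R.isRoot δ) : ∃ z : ℤ, R.coroot γ δ = z := by
  obtain ⟨c, hc⟩ := R.root_int γ hγ
  rw [R.coroot_sum hsl hγ _ hc δ]
  choose z hz using fun i => R.coroot_simple_int i hδ
  refine ⟨∑ i, c i * z i, ?_⟩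
  push_cast
  exact Finset.sum_congr rfl fun i _ => by rw [hz]

lemma coroot_rho_eq (hsl : R.IsSimplyLaced) {β : R.V} (hβ : R.isRoot β)
    (n : I → ℚ) (hn : β = ∑ i, n i • R.α i) :
    R.coroot β R.ρ = ∑ i, n i := by
  rw [R.coroot_sum hsl hβ _ hn]
  simp [R.coroot_simple_rho hsl]

lemma coroot_w_eq {k : I} {ϖ : R.V} (hsl : R.IsSimplyLaced)
    (hfund : R.IsFundamental k ϖ) {β : R.V} (hβ : R.isRoot β)
    (n : I → ℚ) (hn : β = ∑ i, n i • R.α i) :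
    R.coroot β ϖ = n k := by
  rw [R.coroot_sum hsl hβ _ hn]
  have : ∀ i, n i * R.coroot (R.α i) ϖ = if i = k then n i else 0 := by
    intro i
    rw [hfund i]
    split <;> simp
  rw [Finset.sum_congr rfl fun i _ => this i, Finset.sum_ite_eq' Finset.univ k]
  simp

lemma coroot_w_add {k : I} {ϖ : R.V} (hsl : R.IsSimplyLaced)
    (hfund : R.IsFundamental k ϖ) {x y : R.V} (hx : R.isRoot x) (hy : R.isRoot y)
    (hxy : R.isRoot (x + y)) :
    R.coroot (x + y) ϖ = R.coroot x ϖ + R.coroot y ϖ := by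
  obtain ⟨a, ha⟩ := R.root_int x hx
  obtain ⟨b, hb⟩ := R.root_int y hy
  have hab : x + y = ∑ i, (((a i : ℚ)) + ((b i : ℚ))) • R.α i := by
    rw [ha, hb, ← Finset.sum_add_distrib]
    exact Finset.sum_congr rfl fun i _ => by rw [add_smul]
  rw [R.coroot_w_eq hsl hfund hx _ ha, R.coroot_w_eq hsl hfund hy _ hb,
    R.coroot_w_eq hsl hfund hxy _ hab]

lemma exists_coord_ne_zero {β : R.V} (hβ : R.isRoot β) (n : I → ℚ)
    (hn : β = ∑ i, n i • R.α i) : ∃ i, n i ≠ 0 := by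
  by_contra h
  push_neg at h
  apply R.root_ne_zero hβ
  rw [hn]
  simp [h]

/-- Image of a positive root under `w` is positive, provided `w` maps all simple
roots in the support to positive roots. -/
lemma isPos_image {w : R.W} {β : R.V} (hβ : R.IsPos β) (n : I → ℕ)
    (hn : β = ∑ i, (n i : ℚ) • R.α i)
    (h : ∀ i, n i ≠ 0 → R.IsPos (R.toLin w (R.α i))) :
    R.IsPos (R.toLin w β) := by
  classical
  have hm : ∀ i, ∃ m : I → ℕ, n i ≠ 0 → R.toLin w (R.α i) = ∑ j, (m j : ℚ) • R.α j := by
    intro i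
    by_cases hi : n i = 0
    · exact ⟨0, fun hc => absurd hi hc⟩
    · obtain ⟨m, hm⟩ := (h i hi).2
      exact ⟨m, fun _ => hm⟩
  choose m hm using hm
  have hw : R.toLin w β = ∑ j, (∑ i, ((n i : ℚ)) * ((m i j : ℚ))) • R.α j := by
    rw [hn, map_sum]
    have step : ∀ i ∈ Finset.univ, R.toLin w ((n i : ℚ) • R.α i)
        = ∑ j, (((n i : ℚ)) * ((m i j : ℚ))) • R.α j := by
      intro i _
      by_cases hi : n i = 0
      · simp [hi]
      · rw [map_smul, hm i hi, Finset.smul_sum]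
        exact Finset.sum_congr rfl fun j _ => by rw [smul_smul]
    rw [Finset.sum_congr rfl step, Finset.sum_comm]
    refine Finset.sum_congr rfl fun j _ => ?_
    rw [Finset.sum_smul]
  exact R.isPos_of_nonneg_coords (R.root_inv w β hβ.1) _
    (fun j => Finset.sum_nonneg fun i _ => by positivity) hw

/-- The number of inversions of `w`. -/
noncomputable def nInv (w : R.W) : ℕ :=
  (R.posFinset.filter fun β => R.IsNeg (R.toLin w β)).card

lemma nInv_one : R.nInv 1 = 0 := by
  unfold nInv
  rw [Finset.card_eq_zero, Finset.filter_eq_empty_iff]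
  intro β hβ
  rw [map_one, Module.End.one_apply]
  exact fun h => R.not_isPos_and_isNeg (R.mem_posFinset.mp hβ) h

lemma isNeg_iff_neg_isPos {x : R.V} : R.IsNeg (-x) ↔ R.IsPos x := by
  unfold IsNeg; rw [neg_neg]

private lemma card_filter_split (s : Finset R.V) (p q : R.V → Prop) :
    (s.filter q).card = (s.filter fun x => q x ∧ p x).card
      + (s.filter fun x => q x ∧ ¬ p x).card := by
  rw [← Finset.filter_filter, ← Finset.filter_filter]
  exact (Finset.card_filter_add_card_filter_not (s := s.filter q) p).symm

lemma nInv_mul_invol (w r : R.W) (hr : ∀ x, R.toLin r (R.toLin r x) = x) :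
    R.nInv (w * r)
      + 2 * ((R.posFinset.filter fun δ =>
          R.IsNeg (R.toLin r δ) ∧ R.IsNeg (R.toLin w δ)).card)
      = R.nInv w + (R.posFinset.filter fun δ => R.IsNeg (R.toLin r δ)).card := by
  set P := R.posFinset with hP
  set a : R.V → Prop := fun δ => R.IsNeg (R.toLin r δ) with ha
  set b : R.V → Prop := fun δ => R.IsNeg (R.toLin w δ) with hb
  set q : R.V → Prop := fun β => R.IsNeg (R.toLin w (R.toLin r β)) with hq
  have hposP : ∀ β ∈ P, R.IsPos β := fun β h => R.mem_posFinset.mp h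
  have memP : ∀ {β}, R.IsPos β → β ∈ P := fun h => R.mem_posFinset.mpr h
  have hnw : R.nInv (w * r) = (P.filter q).card := by
    unfold nInv
    congr 1
    apply Finset.filter_congr
    intro β _
    rw [map_mul, Module.End.mul_apply]
  -- split nInv (w*r)
  have h1 : (P.filter q).card = (P.filter fun x => q x ∧ a x).card
      + (P.filter fun x => q x ∧ ¬ a x).card := R.card_filter_split P a q
  -- bijection 1 : (q ∧ a) ≃ (a ∧ pos w) via β ↦ -(r β)
  have hbij1 : (P.filter fun x => q x ∧ a x).card
      = (P.filter fun δ => a δ ∧ R.IsPos (R.toLin w δ)).card := by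
    apply Finset.card_nbij' (fun β => -(R.toLin r β)) (fun δ => -(R.toLin r δ))
    · intro β hβ
      rw [Finset.mem_coe, Finset.mem_filter] at hβ ⊢
      obtain ⟨hβP, hqβ, haβ⟩ := hβ
      refine ⟨memP haβ, ?_, ?_⟩
      · show R.IsNeg (R.toLin r (-(R.toLin r β)))
        rw [map_neg, hr, isNeg_iff_neg_isPos]
        exact hposP β hβP
      · show R.IsPos (R.toLin w (-(R.toLin r β)))
        rw [map_neg]
        exact hqβ
    · intro δ hδ
      rw [Finset.mem_coe, Finset.mem_filter] at hδ ⊢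
      obtain ⟨hδP, haδ, hpδ⟩ := hδ
      refine ⟨memP haδ, ?_, ?_⟩
      · show R.IsNeg (R.toLin w (R.toLin r (-(R.toLin r δ))))
        rw [map_neg, hr, map_neg]
        rw [isNeg_iff_neg_isPos]
        exact hpδ
      · show R.IsNeg (R.toLin r (-(R.toLin r δ)))
        rw [map_neg, hr, isNeg_iff_neg_isPos]
        exact hposP δ hδP
    · intro β _
      dsimp only
      rw [map_neg, hr, neg_neg]
    · intro δ _
      dsimp only
      rw [map_neg, hr, neg_neg]
  -- bijection 2 : (q ∧ ¬a) ≃ (¬a ∧ b) via β ↦ r β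
  have hbij2 : (P.filter fun x => q x ∧ ¬ a x).card
      = (P.filter fun δ => b δ ∧ ¬ a δ).card := by
    apply Finset.card_nbij' (fun β => R.toLin r β) (fun δ => R.toLin r δ)
    · intro β hβ
      rw [Finset.mem_coe, Finset.mem_filter] at hβ ⊢
      obtain ⟨hβP, hqβ, haβ⟩ := hβ
      have hroot : R.isRoot (R.toLin r β) := R.root_inv r β (hposP β hβP).1
      have hpos : R.IsPos (R.toLin r β) := by
        rcases R.isPos_or_isNeg hroot with h | h
        · exact h
        · exact absurd h haβ
      refine ⟨memP hpos, hqβ, ?_⟩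
      show ¬ R.IsNeg (R.toLin r (R.toLin r β))
      rw [hr]
      exact fun h => R.not_isPos_and_isNeg (hposP β hβP) h
    · intro δ hδ
      rw [Finset.mem_coe, Finset.mem_filter] at hδ ⊢
      obtain ⟨hδP, hbδ, haδ⟩ := hδ
      have hroot : R.isRoot (R.toLin r δ) := R.root_inv r δ (hposP δ hδP).1
      have hpos : R.IsPos (R.toLin r δ) := by
        rcases R.isPos_or_isNeg hroot with h | h
        · exact h
        · exact absurd h haδ
      refine ⟨memP hpos, ?_, ?_⟩
      · show R.IsNeg (R.toLin w (R.toLin r (R.toLin r δ)))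
        rw [hr]
        exact hbδ
      · show ¬ R.IsNeg (R.toLin r (R.toLin r δ))
        rw [hr]
        exact fun h => R.not_isPos_and_isNeg (hposP δ hδP) h
    · intro β _; exact hr β
    · intro δ _; exact hr δ
  -- split nInv w
  have h2 : R.nInv w = (P.filter fun x => b x ∧ a x).card
      + (P.filter fun x => b x ∧ ¬ a x).card := R.card_filter_split P a b
  -- split A
  have h3 : (P.filter a).card = (P.filter fun x => a x ∧ b x).card
      + (P.filter fun x => a x ∧ ¬ b x).card := R.card_filter_split P b a
  -- a ∧ ¬b  ↔  a ∧ pos w  on P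
  have h4 : (P.filter fun x => a x ∧ ¬ b x).card
      = (P.filter fun δ => a δ ∧ R.IsPos (R.toLin w δ)).card := by
    congr 1
    apply Finset.filter_congr
    intro δ hδ
    have hroot : R.isRoot (R.toLin w δ) := R.root_inv w δ (hposP δ hδ).1
    constructor
    · rintro ⟨h5, h6⟩
      refine ⟨h5, ?_⟩
      rcases R.isPos_or_isNeg hroot with h | h
      · exact h
      · exact absurd h h6
    · rintro ⟨h5, h6⟩
      exact ⟨h5, fun h => R.not_isPos_and_isNeg h6 h⟩
  -- a ∧ b vs b ∧ a
  have h5 : (P.filter fun x => b x ∧ a x).card = (P.filter fun x => a x ∧ b x).card := by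
    congr 1
    apply Finset.filter_congr
    intro δ _
    exact and_comm
  have e1 : (R.posFinset.filter fun δ =>
      R.IsNeg (R.toLin r δ) ∧ R.IsNeg (R.toLin w δ)) = P.filter (fun x => a x ∧ b x) := rfl
  have e2 : (R.posFinset.filter fun δ => R.IsNeg (R.toLin r δ)) = P.filter a := rfl
  rw [hnw, h1, hbij1, hbij2, e1, e2, h3, h4, h2, h5]
  omega

lemma word_reverse_prod (l : List I) :
    ((l.reverse.map R.s).prod) * ((l.map R.s).prod) = 1 := by
  induction l with
  | nil => simp
  | cons i t ih =>
    rw [List.reverse_cons, List.map_append, List.prod_append, List.map_cons,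
      List.prod_cons, List.map_cons, List.map_nil, List.prod_cons, List.prod_nil, mul_one]
    simp only [mul_assoc]
    rw [← mul_assoc (R.s i) (R.s i), R.s_mul_s, one_mul]
    exact ih

lemma exists_word (w : R.W) : ∃ l : List I, (l.map R.s).prod = w := by
  let S : Subgroup R.W :=
    { carrier := {w | ∃ l : List I, (l.map R.s).prod = w}
      one_mem' := ⟨[], rfl⟩
      mul_mem' := by
        rintro x y ⟨lx, hx⟩ ⟨ly, hy⟩
        exact ⟨lx ++ ly, by rw [List.map_append, List.prod_append, hx, hy]⟩
      inv_mem' := by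
        rintro x ⟨l, hl⟩
        refine ⟨l.reverse, ?_⟩
        have := R.word_reverse_prod l
        rw [hl] at this
        exact eq_inv_of_mul_eq_one_left this }
  have hle : Subgroup.closure (Set.range R.s) ≤ S := by
    rw [Subgroup.closure_le]
    rintro x ⟨i, rfl⟩
    exact ⟨[i], by simp⟩
  rw [R.gen] at hle
  exact hle (Subgroup.mem_top w)

lemma exists_reduced_word (w : R.W) :
    ∃ l : List I, l.length = R.len w ∧ (l.map R.s).prod = w := by
  have hne : {n | ∃ l : List I, l.length = n ∧ (l.map R.s).prod = w}.Nonempty := by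
    obtain ⟨l, hl⟩ := R.exists_word w
    exact ⟨l.length, l, rfl, hl⟩
  exact Nat.sInf_mem hne

lemma len_le (l : List I) : R.len ((l.map R.s).prod) ≤ l.length :=
  Nat.sInf_le ⟨l, rfl, rfl⟩

lemma len_one : R.len 1 = 0 := by
  have := R.len_le []
  simpa using this

lemma eq_one_of_len_eq_zero {w : R.W} (h : R.len w = 0) : w = 1 := by
  obtain ⟨l, hlen, hprod⟩ := R.exists_reduced_word w
  rw [h, List.length_eq_zero_iff] at hlen
  rw [hlen] at hprod
  simpa using hprod.symm

lemma len_mul_s_le (w : R.W) (i : I) : R.len (w * R.s i) ≤ R.len w + 1 := by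
  obtain ⟨l, hlen, hprod⟩ := R.exists_reduced_word w
  have h := R.len_le (l ++ [i])
  rw [List.map_append, List.prod_append] at h
  simp only [List.map_cons, List.map_nil, List.prod_cons, List.prod_nil, mul_one] at h
  rw [hprod] at h
  simpa [hlen] using h

lemma len_s_mul_le (w : R.W) (i : I) : R.len (R.s i * w) ≤ R.len w + 1 := by
  obtain ⟨l, hlen, hprod⟩ := R.exists_reduced_word w
  have h := R.len_le (i :: l)
  rw [List.map_cons, List.prod_cons, hprod] at h
  simpa [hlen] using h

lemma len_le_len_mul_s (w : R.W) (i : I) : R.len w ≤ R.len (w * R.s i) + 1 := by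
  have := R.len_mul_s_le (w * R.s i) i
  rwa [mul_assoc, R.s_mul_s, mul_one] at this

lemma inv_simple (hsl : R.IsSimplyLaced) (i : I) :
    (R.posFinset.filter fun δ => R.IsNeg (R.toLin (R.s i) δ)) = {R.α i} := by
  ext δ
  simp only [Finset.mem_filter, Finset.mem_singleton, R.mem_posFinset]
  constructor
  · rintro ⟨hpos, hneg⟩
    by_contra hne
    exact R.not_isPos_and_isNeg (R.isPos_s_apply hsl hpos hne) hneg
  · rintro rfl
    refine ⟨R.isPos_simple i, ?_⟩
    show R.IsNeg (R.toLin (R.s i) (R.α i))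
    rw [R.s_apply_self]
    exact R.isNeg_neg_of_isPos (R.isPos_simple i)

lemma nInv_mul_s (hsl : R.IsSimplyLaced) (w : R.W) (i : I) :
    R.nInv (w * R.s i) + 2 * (if R.IsNeg (R.toLin w (R.α i)) then 1 else 0)
      = R.nInv w + 1 := by
  have hid := R.nInv_mul_invol w (R.s i) (R.s_invol i)
  have e1 : (R.posFinset.filter fun δ =>
      R.IsNeg (R.toLin (R.s i) δ) ∧ R.IsNeg (R.toLin w δ))
      = ({R.α i} : Finset R.V).filter fun δ => R.IsNeg (R.toLin w δ) := by
    rw [← Finset.filter_filter, R.inv_simple hsl]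
  rw [e1, R.inv_simple hsl, Finset.filter_singleton] at hid
  by_cases h : R.IsNeg (R.toLin w (R.α i))
  · rw [if_pos h] at hid ⊢
    simpa using hid
  · rw [if_neg h] at hid ⊢
    simpa using hid

lemma toLin_inv_cancel (v : R.W) (y : R.V) : R.toLin v (R.toLin v⁻¹ y) = y := by
  rw [← Module.End.mul_apply, ← map_mul, mul_inv_cancel, map_one, Module.End.one_apply]

lemma conj_refl_simple {v : R.W} {i j : I} (heq : R.toLin v (R.α i) = R.α j) :
    v * R.s i * v⁻¹ = R.s j := by
  apply R.faithful
  apply LinearMap.ext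
  intro x
  rw [map_mul, map_mul, Module.End.mul_apply, Module.End.mul_apply]
  rw [R.s_apply (x := R.toLin v⁻¹ x), map_sub, map_smul, R.toLin_inv_cancel, heq]
  rw [R.s_apply]
  have hBi : R.B (R.α i) (R.toLin v⁻¹ x) = R.B (R.α j) x := by
    conv_rhs => rw [← heq, ← R.toLin_inv_cancel v x]
    exact (R.B_inv v (R.α i) (R.toLin v⁻¹ x)).symm ▸ rfl
  have hBii : R.B (R.α i) (R.α i) = R.B (R.α j) (R.α j) := by
    rw [← heq]
    exact (R.B_inv v (R.α i) (R.α i)).symm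
  unfold coroot
  rw [hBi, hBii]

lemma deletion (hsl : R.IsSimplyLaced) : ∀ (l : List I) (i : I),
    R.IsNeg (R.toLin ((l.map R.s).prod) (R.α i)) →
    R.len ((l.map R.s).prod * R.s i) + 2 ≤ l.length + 1 := by
  intro l
  induction l with
  | nil =>
    intro i h
    exfalso
    rw [List.map_nil, List.prod_nil, map_one, Module.End.one_apply] at h
    exact R.not_isPos_and_isNeg (R.isPos_simple i) h
  | cons j t ih =>
    intro i h
    rw [List.map_cons, List.prod_cons] at h ⊢
    rw [map_mul, Module.End.mul_apply] at h
    set v := (t.map R.s).prod with hv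
    rcases R.isPos_or_isNeg (R.root_inv v _ (R.root_simple i)) with hp | hn
    · have heq : R.toLin v (R.α i) = R.α j := by
        by_contra hne
        exact R.not_isPos_and_isNeg (R.isPos_s_apply hsl hp hne) h
      have hconj : v * R.s i = R.s j * v := by
        have h1 := R.conj_refl_simple heq
        calc v * R.s i = (v * R.s i * v⁻¹) * v := by group
          _ = R.s j * v := by rw [h1]
      have h2 : R.s j * v * R.s i = v := by
        rw [mul_assoc, hconj, ← mul_assoc, R.s_mul_s, one_mul]
      rw [h2]
      have h3 := R.len_le t
      rw [← hv] at h3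
      simp only [List.length_cons]
      omega
    · have hIH := ih i hn
      have hle : R.len (R.s j * (v * R.s i)) ≤ R.len (v * R.s i) + 1 := R.len_s_mul_le _ j
      rw [← mul_assoc] at hle
      simp only [List.length_cons]
      omega

lemma len_eq_nInv (hsl : R.IsSimplyLaced) (w : R.W) : R.len w = R.nInv w := by
  suffices h : ∀ n w, R.len w = n → R.len w = R.nInv w from h (R.len w) w rfl
  intro n
  induction n using Nat.strong_induction_on with
  | _ n ih =>
    intro w hw
    rcases n with _ | n
    · have h1 := R.eq_one_of_len_eq_zero hw
      rw [h1, R.len_one, R.nInv_one]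
    · obtain ⟨l, hlen, hprod⟩ := R.exists_reduced_word w
      rcases List.eq_nil_or_concat l with rfl | ⟨t, i, rfl⟩
      · rw [hw] at hlen; simp at hlen
      · set u := (t.map R.s).prod with hu
        have hw_eq : w = u * R.s i := by
          rw [← hprod, List.concat_eq_append, List.map_append, List.prod_append]
          simp [hu]
        have hlent : t.length = n := by
          rw [hw] at hlen
          simp at hlen
          omega
        have hwαi : R.IsNeg (R.toLin w (R.α i)) := by
          rcases R.isPos_or_isNeg (R.root_inv u _ (R.root_simple i)) with hp | hn
          · rw [hw_eq, map_mul, Module.End.mul_apply, R.s_apply_self, map_neg]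
            exact R.isNeg_iff_neg_isPos.mpr hp
          · exfalso
            have hdel := R.deletion hsl t i hn
            rw [← hu, ← hw_eq] at hdel
            omega
        have hid := R.nInv_mul_s hsl w i
        rw [if_pos hwαi] at hid
        have hwsi : w * R.s i = u := by
          rw [hw_eq, mul_assoc, R.s_mul_s, mul_one]
        rw [hwsi] at hid
        have h1 : R.len u ≤ n := by
          have := R.len_le t
          rw [← hu] at this
          omega
        have h2 : R.len w ≤ R.len u + 1 := by
          have := R.len_le_len_mul_s w i
          rwa [hwsi] at this
        have h3 := ih (R.len u) (by omega) u rfl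
        omega

lemma refl_apply {β : R.V} (hβ : R.isRoot β) (x : R.V) :
    R.toLin (R.refl β) x = x - R.coroot β x • β := by
  unfold refl
  rw [dif_pos hβ]
  have hβw : β = R.toLin (R.root_gen β hβ).choose
      (R.α (R.root_gen β hβ).choose_spec.choose) :=
    (R.root_gen β hβ).choose_spec.choose_spec
  set w := (R.root_gen β hβ).choose
  set i := (R.root_gen β hβ).choose_spec.choose
  rw [map_mul, map_mul, Module.End.mul_apply, Module.End.mul_apply]
  rw [R.s_apply (x := R.toLin w⁻¹ x), map_sub, map_smul, R.toLin_inv_cancel, ← hβw]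
  have h1 : R.B (R.α i) (R.toLin w⁻¹ x) = R.B β x := by
    conv_rhs => rw [hβw, ← R.toLin_inv_cancel w x]
    exact (R.B_inv w _ _).symm
  have h2 : R.B (R.α i) (R.α i) = R.B β β := by
    rw [hβw]
    exact (R.B_inv w _ _).symm
  have hc : R.coroot (R.α i) (R.toLin w⁻¹ x) = R.coroot β x := by
    unfold coroot
    rw [h1, h2]
  rw [hc]

lemma refl_invol {β : R.V} (hβ : R.isRoot β) (x : R.V) :
    R.toLin (R.refl β) (R.toLin (R.refl β) x) = x := by
  rw [R.refl_apply hβ, R.refl_apply hβ, coroot_sub, coroot_smul, R.coroot_self hβ]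
  have : R.coroot β x - R.coroot β x * 2 = - R.coroot β x := by ring
  rw [this, neg_smul]
  abel

lemma refl_simple (i : I) : R.refl (R.α i) = R.s i := by
  apply R.faithful
  apply LinearMap.ext
  intro x
  rw [R.refl_apply (R.root_simple i), R.s_apply]

lemma isMinRep_pos (hsl : R.IsSimplyLaced) {J : Set I} {y : R.W}
    (hy : R.IsMinRep J y) {i : I} (hi : i ∈ J) :
    R.IsPos (R.toLin y (R.α i)) := by
  rcases R.isPos_or_isNeg (R.root_inv y _ (R.root_simple i)) with hp | hn
  · exact hp
  · exfalso
    have hid := R.nInv_mul_s hsl y i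
    rw [if_pos hn] at hid
    have h1 : R.s i ∈ R.WJ J := Subgroup.subset_closure (Set.mem_image_of_mem _ hi)
    have h2 := hy (R.s i) h1
    rw [R.len_eq_nInv hsl, R.len_eq_nInv hsl] at h2
    omega

lemma coroot_symm (hsl : R.IsSimplyLaced) {γ δ : R.V} (hγ : R.isRoot γ)
    (hδ : R.isRoot δ) : R.coroot γ δ = R.coroot δ γ := by
  unfold coroot
  rw [R.B_symm γ δ, hsl γ δ hγ hδ]

lemma not_coroot_eq_two (hsl : R.IsSimplyLaced) {γ δ : R.V} (hγ : R.isRoot γ)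
    (hδ : R.isRoot δ) (hne : δ ≠ γ) (h2 : R.coroot γ δ = 2) : False := by
  have h2' : R.coroot δ γ = 2 := by rw [← R.coroot_symm hsl hγ hδ, h2]
  have key : ∀ n : ℕ, R.isRoot (δ + (2*n : ℚ) • (γ - δ))
      ∧ R.coroot γ (δ + (2*n:ℚ) • (γ - δ)) = 2
      ∧ R.coroot δ (δ + (2*n:ℚ) • (γ - δ)) = 2 := by
    intro n
    induction n with
    | zero =>
      norm_num
      exact ⟨hδ, h2, R.coroot_self hδ⟩
    | succ n ihn =>
      obtain ⟨hr, hcγ, hcδ⟩ := ihn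
      set x := δ + (2*n:ℚ) • (γ - δ) with hx
      have h1 : R.toLin (R.refl δ) x = x - (2:ℚ) • δ := by
        rw [R.refl_apply hδ, hcδ]
      have hneg2 : R.coroot γ (x - (2:ℚ) • δ) = -2 := by
        rw [coroot_sub, coroot_smul, hcγ, h2]; ring
      have h3 : R.toLin (R.refl γ) (R.toLin (R.refl δ) x) = x - (2:ℚ) • δ + (2:ℚ) • γ := by
        rw [h1, R.refl_apply hγ, hneg2, neg_smul]
        abel
      have hxn : δ + (2*((n:ℚ)+1)) • (γ - δ) = x - (2:ℚ) • δ + (2:ℚ) • γ := by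
        rw [hx]
        module
      refine ⟨?_, ?_, ?_⟩
      · rw [show ((2:ℚ)*((n+1:ℕ):ℚ)) = 2*((n:ℚ)+1) by push_cast; ring, hxn, ← h3]
        exact R.root_inv _ _ (R.root_inv _ _ hr)
      · rw [show ((2:ℚ)*((n+1:ℕ):ℚ)) = 2*((n:ℚ)+1) by push_cast; ring, hxn]
        rw [coroot_add, coroot_sub, coroot_smul, coroot_smul, R.coroot_self hγ, h2, hcγ]
        ring
      · rw [show ((2:ℚ)*((n+1:ℕ):ℚ)) = 2*((n:ℚ)+1) by push_cast; ring, hxn]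
        rw [coroot_add, coroot_sub, coroot_smul, coroot_smul, R.coroot_self hδ, h2', hcδ]
        ring
  have hu : γ - δ ≠ 0 := sub_ne_zero.mpr (Ne.symm hne)
  have hinj : Function.Injective (fun n : ℕ => δ + (2*(n:ℚ)) • (γ - δ)) := by
    intro a b hab
    simp only at hab
    have hz : ((2*(a:ℚ)) - 2*(b:ℚ)) • (γ - δ) = 0 := by
      rw [sub_smul]
      have := congrArg (fun z => z - (δ + (2*(b:ℚ)) • (γ - δ))) hab
      calc (2*(a:ℚ)) • (γ - δ) - (2*(b:ℚ)) • (γ - δ)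
          = (δ + (2*(a:ℚ)) • (γ - δ)) - (δ + (2*(b:ℚ)) • (γ - δ)) := by abel
        _ = 0 := by rw [hab]; abel
    rcases smul_eq_zero.mp hz with h | h
    · have : (a:ℚ) = (b:ℚ) := by linarith [sub_eq_zero.mp h]
      exact_mod_cast this
    · exact absurd h hu
  exact R.root_finite.not_infinite
    (Set.infinite_of_injective_forall_mem hinj (fun n => (key n).1))

lemma minrep_pos_image (hsl : R.IsSimplyLaced) {k : I} {ϖ : R.V}
    (hfund : R.IsFundamental k ϖ) {J : Set I} (hJ : J = {i | i ≠ k}) {y : R.W}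
    (hy : R.IsMinRep J y) {δ : R.V} (hδ : R.IsPos δ) (hδk : R.coroot δ ϖ = 0) :
    R.IsPos (R.toLin y δ) := by
  obtain ⟨hroot, n, hn⟩ := id hδ
  have hnk : (n k : ℚ) = 0 := by rw [← R.coroot_w_eq hsl hfund hroot _ hn]; exact hδk
  apply R.isPos_image hδ n hn
  intro i hi
  have hik : i ≠ k := by rintro rfl; exact hi (by exact_mod_cast hnk)
  exact R.isMinRep_pos hsl hy (by rw [hJ]; exact hik)

lemma coroot_w_one (hsl : R.IsSimplyLaced) {k : I} {ϖ : R.V}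
    (hfund : R.IsFundamental k ϖ) (hmin : R.IsMinuscule ϖ) {δ : R.V}
    (hδ : R.IsPos δ) (h0 : R.coroot δ ϖ ≠ 0) : R.coroot δ ϖ = 1 := by
  obtain ⟨hroot, n, hn⟩ := id hδ
  have he : R.coroot δ ϖ = (n k:ℚ) := R.coroot_w_eq hsl hfund hroot _ hn
  have hm := hmin δ hroot
  simp only [Set.mem_insert_iff, Set.mem_singleton_iff] at hm
  rcases hm with h | h | h
  · exfalso
    rw [he] at h
    have h2 : (0:ℚ) ≤ (n k:ℚ) := Nat.cast_nonneg _
    linarith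
  · exact absurd h h0
  · exact h

lemma coroot_eq_one_of_inv (hsl : R.IsSimplyLaced) {k : I} {ϖ : R.V}
    (hfund : R.IsFundamental k ϖ) (hmin : R.IsMinuscule ϖ)
    {γ δ : R.V} (hγ : R.IsPos γ) (hγw : R.coroot γ ϖ = 1)
    (hδ : R.IsPos δ) (hne : δ ≠ γ)
    (hneg : R.IsNeg (R.toLin (R.refl γ) δ)) :
    R.coroot γ δ = 1 := by
  obtain ⟨z, hz⟩ := R.coroot_int hsl hγ.1 hδ.1
  have hneg' : R.IsPos (-(δ - R.coroot γ δ • γ)) := by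
    have h := hneg
    unfold IsNeg at h
    rwa [R.refl_apply hγ.1] at h
  obtain ⟨hεroot, mm, hmm⟩ := id hneg'
  obtain ⟨_, n, hn⟩ := id hδ
  obtain ⟨_, g, hg⟩ := id hγ
  have hcoords : ∀ i, (mm i : ℚ) = R.coroot γ δ * (g i:ℚ) - (n i:ℚ) := by
    set c := R.coroot γ δ with hcdef
    have h1 : -(δ - c • γ)
        = ∑ i, (c * (g i:ℚ) - (n i:ℚ)) • R.α i := by
      rw [neg_sub]
      conv_lhs => rw [hn, hg]
      rw [Finset.smul_sum, ← Finset.sum_sub_distrib]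
      refine Finset.sum_congr rfl fun i _ => ?_
      rw [smul_smul, ← sub_smul]
    intro i
    exact congrFun (R.coeff_eq (hmm.symm.trans h1)) i
  have hzpos : 1 ≤ z := by
    by_contra hle
    push_neg at hle
    have hzle : z ≤ 0 := by omega
    have hc0 : R.coroot γ δ ≤ 0 := by rw [hz]; exact_mod_cast hzle
    have hn0 : ∀ i, (n i:ℚ) = 0 := by
      intro i
      have h1 := hcoords i
      nlinarith [Nat.cast_nonneg (α := ℚ) (n i), Nat.cast_nonneg (α := ℚ) (g i),
        Nat.cast_nonneg (α := ℚ) (mm i), mul_nonneg (Nat.cast_nonneg (α := ℚ) (g i))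
          (neg_nonneg.mpr hc0)]
    apply R.root_ne_zero hδ.1
    rw [hn]
    exact Finset.sum_eq_zero fun i _ => by rw [hn0 i, zero_smul]
  have h3 : R.coroot γ ϖ = (g k : ℚ) := R.coroot_w_eq hsl hfund hγ.1 _ hg
  have h4 : R.coroot δ ϖ = (n k : ℚ) := R.coroot_w_eq hsl hfund hδ.1 _ hn
  have hgk : (g k:ℚ) = 1 := by rw [← h3, hγw]
  have hεcoord : R.coroot (-(δ - R.coroot γ δ • γ)) ϖ
      = R.coroot γ δ - R.coroot δ ϖ := by
    rw [R.coroot_w_eq hsl hfund hεroot _ hmm, hcoords k, hgk, h4]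
    ring
  have hδw := hmin δ hδ.1
  have hεw := hmin _ hεroot
  simp only [Set.mem_insert_iff, Set.mem_singleton_iff] at hδw hεw
  have hb1 : R.coroot δ ϖ ≤ 1 := by rcases hδw with h | h | h <;> rw [h] <;> norm_num
  have hb2 : R.coroot (-(δ - R.coroot γ δ • γ)) ϖ ≤ 1 := by
    rcases hεw with h | h | h <;> rw [h] <;> norm_num
  have hz2 : z ≤ 2 := by
    have : R.coroot γ δ ≤ 2 := by
      rw [hεcoord] at hb2
      linarith
    rw [hz] at this
    exact_mod_cast this
  have hz1 : z = 1 := by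
    by_contra hz1
    have : z = 2 := by omega
    exact R.not_coroot_eq_two hsl hγ.1 hδ.1 hne (by rw [hz, this]; norm_num)
  rw [hz, hz1]
  norm_num

end RootSystemData

-- AUXEND

/-- In simply-laced type with `ϖ_k` minuscule, for `y ∈ W^J` and
`γ ∈ Δ⁺ \ Δ⁺_J`, there is a quantum edge `y → y s_γ` iff `y ≠ e` and
`γ = α_k`. -/
theorem stmt12 {I : Type} [Fintype I] [DecidableEq I] (R : RootSystemData I)
    (hirr : R.IsIrreducible) (hsl : R.IsSimplyLaced)
    (k : I) (ϖ : R.V) (hfund : R.IsFundamental k ϖ) (hmin : R.IsMinuscule ϖ)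
    (J : Set I) (hJ : J = {i | i ≠ k})
    (y : R.W) (hy : R.IsMinRep J y)
    (γ : R.V) (hγ : R.IsPos γ) (hγJ : γ ∉ Submodule.span ℚ (R.α '' J)) :
    R.QuantumEdge y γ ↔ (y ≠ 1 ∧ γ = R.α k) := by
  classical
  have hρak : R.coroot (R.α k) R.ρ = 1 := R.coroot_simple_rho hsl k
  constructor
  · rintro ⟨hposγ, heq⟩
    have hrootγ := hγ.1
    obtain ⟨_, n, hn⟩ := id hγ
    have hnk : n k ≠ 0 := by
      intro h0
      apply hγJ
      rw [hn]
      apply Submodule.sum_mem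
      intro i _
      by_cases hik : i = k
      · rw [hik, h0]; simp
      · refine Submodule.smul_mem _ _ (Submodule.subset_span ?_)
        exact ⟨i, by rw [hJ]; exact hik, rfl⟩
    have hγw : R.coroot γ ϖ = 1 := by
      apply R.coroot_w_one hsl hfund hmin hγ
      rw [R.coroot_w_eq hsl hfund hrootγ _ hn]
      exact_mod_cast hnk
    have hrinvol : ∀ x, R.toLin (R.refl γ) (R.toLin (R.refl γ) x) = x :=
      R.refl_invol hrootγ
    have hid := R.nInv_mul_invol y (R.refl γ) hrinvol
    set A := R.posFinset.filter (fun δ => R.IsNeg (R.toLin (R.refl γ) δ)) with hA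
    set m := (R.posFinset.filter fun δ => R.IsNeg (R.toLin (R.refl γ) δ)
        ∧ R.IsNeg (R.toLin y δ)).card with hm
    set H := ∑ i, n i with hHdef
    have hHcast : R.coroot γ R.ρ = (H:ℚ) := by
      rw [R.coroot_rho_eq hsl hrootγ _ hn, hHdef]
      push_cast
      rfl
    have hl1 := R.len_eq_nInv hsl (y * R.refl γ)
    have hl2 := R.len_eq_nInv hsl y
    have hkey : A.card + 2*H = 2*m + 1 := by
      have hq : ((R.nInv (y * R.refl γ) : ℚ)) = (R.nInv y : ℚ) + 1 - 2*(H:ℚ) := by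
        rw [← hl1, ← hl2, heq, hHcast]
      have hq2 : ((R.nInv (y * R.refl γ) :ℚ)) + 2*(m:ℚ)
          = (R.nInv y:ℚ) + (A.card:ℚ) := by exact_mod_cast hid
      have h5 : ((A.card:ℚ)) + 2*(H:ℚ) = 2*(m:ℚ) + 1 := by linarith
      exact_mod_cast h5
    have hrγ : R.toLin (R.refl γ) γ = -γ := by
      rw [R.refl_apply hrootγ, R.coroot_self hrootγ]
      module
    have hγA : γ ∈ A := by
      rw [hA, Finset.mem_filter, R.mem_posFinset]
      refine ⟨hγ, ?_⟩
      show R.IsNeg (R.toLin (R.refl γ) γ)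
      rw [hrγ]
      exact R.isNeg_neg_of_isPos hγ
    set S1 := (A.erase γ).filter (fun δ => R.IsNeg (R.toLin y δ)) with hS1
    set S2 := (A.erase γ).filter (fun δ => ¬ R.IsNeg (R.toLin y δ)) with hS2
    have hsplit : S1.card + S2.card = (A.erase γ).card :=
      Finset.card_filter_add_card_filter_not _
    have hAcard : (A.erase γ).card + 1 = A.card := Finset.card_erase_add_one hγA
    have hm_le : m ≤ S1.card + 1 := by
      have hmeq : m = (A.filter fun δ => R.IsNeg (R.toLin y δ)).card := by
        rw [hm, hA, Finset.filter_filter]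
      have hsub : (A.filter fun δ => R.IsNeg (R.toLin y δ)) ⊆ insert γ S1 := by
        intro δ hδ'
        rw [Finset.mem_filter] at hδ'
        rcases eq_or_ne δ γ with rfl | hneδ
        · exact Finset.mem_insert_self _ _
        · apply Finset.mem_insert_of_mem
          rw [hS1, Finset.mem_filter, Finset.mem_erase]
          exact ⟨⟨hneδ, hδ'.1⟩, hδ'.2⟩
      calc m = _ := hmeq
        _ ≤ (insert γ S1).card := Finset.card_le_card hsub
        _ ≤ S1.card + 1 := Finset.card_insert_le _ _
    have hstruct : ∀ δ ∈ A.erase γ, R.IsPos δ ∧ δ ≠ γ ∧ R.coroot γ δ = 1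
        ∧ R.IsPos (γ - δ) ∧ (γ - δ) ∈ A.erase γ := by
      intro δ hδ'
      rw [Finset.mem_erase, hA, Finset.mem_filter, R.mem_posFinset] at hδ'
      obtain ⟨hneδ, hδpos, hδneg⟩ := hδ'
      have hc1 : R.coroot γ δ = 1 :=
        R.coroot_eq_one_of_inv hsl hfund hmin hγ hγw hδpos hneδ hδneg
      have hrδ : R.toLin (R.refl γ) δ = δ - γ := by
        rw [R.refl_apply hrootγ, hc1, one_smul]
      have hγδpos : R.IsPos (γ - δ) := by
        have h6 : R.IsPos (-(δ - γ)) := by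
          have h7 := hδneg
          unfold RootSystemData.IsNeg at h7
          rwa [hrδ] at h7
        rwa [neg_sub] at h6
      refine ⟨hδpos, hneδ, hc1, hγδpos, ?_⟩
      rw [Finset.mem_erase, hA, Finset.mem_filter, R.mem_posFinset]
      refine ⟨?_, hγδpos, ?_⟩
      · intro hcon
        apply R.root_ne_zero hδpos.1
        have h8 : δ = γ - (γ - δ) := by abel
        rw [h8, hcon, sub_self]
      · show R.IsNeg (R.toLin (R.refl γ) (γ - δ))
        rw [map_sub, hrγ, hrδ]
        have h9 : -γ - (δ - γ) = -δ := by abel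
        rw [h9]
        exact R.isNeg_neg_of_isPos hδpos
    have hS12 : S1.card ≤ S2.card := by
      apply Finset.card_le_card_of_injOn (fun δ => γ - δ)
      · intro δ hδ'
        rw [hS1, Finset.mem_coe, Finset.mem_filter] at hδ'
        obtain ⟨hδA, hδyneg⟩ := hδ'
        obtain ⟨hδpos, hneδ, hc1, hγδpos, hγδA⟩ := hstruct δ hδA
        rw [hS2, Finset.mem_coe, Finset.mem_filter]
        refine ⟨hγδA, ?_⟩
        have hδw1 : R.coroot δ ϖ = 1 := by
          apply R.coroot_w_one hsl hfund hmin hδpos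
          intro h0
          exact R.not_isPos_and_isNeg
            (R.minrep_pos_image hsl hfund hJ hy hδpos h0) hδyneg
        have hadd : R.coroot γ ϖ = R.coroot δ ϖ + R.coroot (γ - δ) ϖ := by
          have h7 : δ + (γ - δ) = γ := by abel
          have h8 := R.coroot_w_add hsl hfund hδpos.1 hγδpos.1
            (by rw [h7]; exact hrootγ)
          rw [h7] at h8
          exact h8
        have hγδw : R.coroot (γ - δ) ϖ = 0 := by
          rw [hγw, hδw1] at hadd
          linarith
        intro hcon
        exact R.not_isPos_and_isNeg
          (R.minrep_pos_image hsl hfund hJ hy hγδpos hγδw) hcon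
      · intro a _ b _ hab
        exact sub_right_injective hab
    have hH1 : 1 ≤ H := by
      rcases Nat.eq_zero_or_pos H with h0 | h
      · exfalso
        apply hnk
        have h1 : ∑ i, n i = 0 := by rw [← hHdef]; exact h0
        exact Finset.sum_eq_zero_iff.mp h1 k (Finset.mem_univ k)
      · exact h
    have hHeq : H = 1 := by omega
    obtain ⟨i0, hi0⟩ : ∃ i, n i ≠ 0 := ⟨k, hnk⟩
    have hsum_split : n i0 + ∑ x ∈ Finset.univ.erase i0, n x = H := by
      rw [hHdef, Finset.add_sum_erase _ _ (Finset.mem_univ i0)]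
    have h9 : 1 ≤ n i0 := Nat.pos_of_ne_zero hi0
    have h10 : ∑ x ∈ Finset.univ.erase i0, n x = 0 := by omega
    have hothers : ∀ j, j ≠ i0 → n j = 0 := fun j hj =>
      Finset.sum_eq_zero_iff.mp h10 j (Finset.mem_erase.mpr ⟨hj, Finset.mem_univ j⟩)
    have hni0 : n i0 = 1 := by omega
    have hik : i0 = k := by
      by_contra hcon
      exact hnk (hothers k fun h => hcon h.symm)
    have hγαk : γ = R.α k := by
      rw [hn, Finset.sum_eq_single i0
        (fun j _ hj => by rw [hothers j hj]; simp)
        (fun h => absurd (Finset.mem_univ i0) h)]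
      rw [hni0, hik]
      simp
    refine ⟨?_, hγαk⟩
    have hm1 : 1 ≤ m := by omega
    have hmpos : 0 < (R.posFinset.filter fun δ => R.IsNeg (R.toLin (R.refl γ) δ)
        ∧ R.IsNeg (R.toLin y δ)).card := by rw [← hm]; omega
    obtain ⟨δ0, hδ0⟩ := Finset.card_pos.mp hmpos
    rw [Finset.mem_filter] at hδ0
    intro hy1
    have h11 := hδ0.2.2
    rw [hy1, map_one, Module.End.one_apply] at h11
    exact R.not_isPos_and_isNeg (R.mem_posFinset.mp hδ0.1) h11
  · rintro ⟨hy1, rfl⟩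
    refine ⟨R.isPos_simple k, ?_⟩
    rw [R.refl_simple k, hρak]
    have hyk : R.IsNeg (R.toLin y (R.α k)) := by
      rcases R.isPos_or_isNeg (R.root_inv y _ (R.root_simple k)) with hp | hn
      · exfalso
        have hall : ∀ i, R.IsPos (R.toLin y (R.α i)) := by
          intro i
          by_cases hik : i = k
          · rw [hik]; exact hp
          · exact R.isMinRep_pos hsl hy (by rw [hJ]; exact hik)
        have h0 : R.nInv y = 0 := by
          unfold RootSystemData.nInv
          rw [Finset.card_eq_zero, Finset.filter_eq_empty_iff]
          intro β hβ
          have hβpos := R.mem_posFinset.mp hβ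
          obtain ⟨_, nβ, hnβ⟩ := id hβpos
          have h1 := R.isPos_image hβpos nβ hnβ (fun i _ => hall i)
          exact fun hcon => R.not_isPos_and_isNeg h1 hcon
        have h2 := R.len_eq_nInv hsl y
        exact hy1 (R.eq_one_of_len_eq_zero (by omega))
      · exact hn
    have hid := R.nInv_mul_s hsl y k
    rw [if_pos hyk] at hid
    have hl1 := R.len_eq_nInv hsl (y * R.s k)
    have hl2 := R.len_eq_nInv hsl y
    have h3 : R.len (y * R.s k) + 1 = R.len y := by omega
    have h4 : ((R.len (y * R.s k) : ℚ)) + 1 = (R.len y : ℚ) := by exact_mod_cast h3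
    linarith
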